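/- Let f, g : ℝ → ℝ be twice differentiable with f''(t) = -f(t) and g''(t) = -g(t) for all t. Then the function I₂,₂(t) = 2·(f'(t)·g'(t) - f(t)·g(t))·cos(2t) + 2·(f(t)·g'(t) + f'(t)·g(t))·sin(2t) is constant, i.e., I₂,₂(t) = I₂,₂(0) for all t ∈ ℝ. -/

import Mathlib

theorem uncoupled_oscillators_first_integral_7 (f f' g g' : ℝ → ℝ)
    (hf : ∀ t, HasDerivAt f (f' t) t)
    (hf' : ∀ t, HasDerivAt f' (-(f t)) t)
    (hg : ∀ t, HasDerivAt g (g' t) t)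
    (hg' : ∀ t, HasDerivAt g' (-(g t)) t) :
    ∀ t : ℝ, 2 * (f' t * g' t - f t * g t) * Real.cos (2*t) + 2 * (f t * g' t + f' t * g t) * Real.sin (2*t) = 2 * (f' 0 * g' 0 - f 0 * g 0) * Real.cos (2*0) + 2 * (f 0 * g' 0 + f' 0 * g 0) * Real.sin (2*0) := by
  set I : ℝ → ℝ := fun t => 2 * (f' t * g' t - f t * g t) * Real.cos (2*t) + 2 * (f t * g' t + f' t * g t) * Real.sin (2*t) with hI
  have hderiv : ∀ t, HasDerivAt I 0 t := by
    intro t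
    have hcos : HasDerivAt (fun t : ℝ => Real.cos (2*t)) (-Real.sin (2*t) * 2) t :=
      (Real.hasDerivAt_cos (2*t)).comp t (by simpa using (hasDerivAt_id t).const_mul (2:ℝ))
    have hsin : HasDerivAt (fun t : ℝ => Real.sin (2*t)) (Real.cos (2*t) * 2) t :=
      (Real.hasDerivAt_sin (2*t)).comp t (by simpa using (hasDerivAt_id t).const_mul (2:ℝ))
    have h1 : HasDerivAt (fun t => 2 * (f' t * g' t - f t * g t))
        (2 * ((-(f t)) * g' t + f' t * (-(g t)) - (f' t * g t + f t * g' t))) t :=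
      (((hf' t).mul (hg' t)).sub ((hf t).mul (hg t))).const_mul 2
    have h2 : HasDerivAt (fun t => 2 * (f t * g' t + f' t * g t))
        (2 * ((f' t * g' t + f t * (-(g t))) + ((-(f t)) * g t + f' t * g' t))) t :=
      (((hf t).mul (hg' t)).add ((hf' t).mul (hg t))).const_mul 2
    have := (h1.mul hcos).add (h2.mul hsin)
    refine this.congr_deriv ?_
    ring
  intro t
  have : ∀ t, I t = I 0 := fun t => by
    have := is_const_of_deriv_eq_zero (fun x => (hderiv x).differentiableAt)
      (fun x => (hderiv x).deriv) t 0
    simpa using this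
  exact this t
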